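/- Let β ∈ ℂ with Re(β) > 0 and Im(β) ≥ 0, let ε > 0, k ∈ ℕ, and t > exp^∘k(0) with M_{ε,k}(t) < Re(β). Let h : [t,∞) → ℝ be of class C¹ and nondecreasing, and suppose that either h'(x) → λ' as x → +∞ for some real λ' > Im(β)/Re(β), or h'(x) → +∞ as x → +∞. Then there exists t' ≥ t such that h(x + Re(β) − M_{ε,k}(x)) − h(x) ≥ Im(β) + M_{ε,k}(x) for all x ≥ t' (i.e. the restriction of h to [t',∞) is an upper map of type (β,ε,k)). -/

import Mathlib

open Filter Set

/-- `M_{ε,k}(x) = (∏_{j=0}^{k-1} log^∘j(x))⁻¹ · (log^∘k(x))^{-(1+ε)}`. -/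
noncomputable def Mfun (ε : ℝ) (k : ℕ) (x : ℝ) : ℝ :=
  (∏ j ∈ Finset.range k, Real.log^[j] x)⁻¹ * (Real.log^[k] x) ^ (-(1 + ε))

lemma iterlog_lt (k : ℕ) (c x : ℝ) (hx : Real.exp^[k] c < x) :
    ∀ j ≤ k, Real.exp^[k - j] c < Real.log^[j] x := by
  intro j hj
  induction j with
  | zero => simpa using hx
  | succ n ih =>
    have hn : n ≤ k := Nat.le_of_succ_le hj
    have IH := ih hn
    have hk : k - n = (k - (n + 1)) + 1 := by omega
    rw [hk, Function.iterate_succ_apply'] at IH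
    rw [Function.iterate_succ_apply']
    calc Real.exp^[k - (n + 1)] c
        = Real.log (Real.exp (Real.exp^[k - (n + 1)] c)) := (Real.log_exp _).symm
      _ < Real.log (Real.log^[n] x) := Real.log_lt_log (Real.exp_pos _) IH

lemma expIter_nonneg (m : ℕ) : 0 ≤ Real.exp^[m] (0 : ℝ) := by
  cases m with
  | zero => simp
  | succ n => rw [Function.iterate_succ_apply']; exact (Real.exp_pos _).le

lemma expIter_one_le (m : ℕ) : 1 ≤ Real.exp^[m] (1 : ℝ) := by
  induction m with
  | zero => simp
  | succ n ih =>
    rw [Function.iterate_succ_apply']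
    exact Real.one_le_exp (by linarith)

lemma Mfun_pos {ε : ℝ} {k : ℕ} {x : ℝ} (hx : Real.exp^[k] 0 < x) :
    0 < Mfun ε k x := by
  have hlog : ∀ j ≤ k, 0 < Real.log^[j] x := fun j hj =>
    lt_of_le_of_lt (expIter_nonneg _) (iterlog_lt k 0 x hx j hj)
  apply mul_pos
  · exact inv_pos.mpr (Finset.prod_pos fun j hj =>
      hlog j (Nat.le_of_lt (Finset.mem_range.mp hj)))
  · exact Real.rpow_pos_of_pos (hlog k le_rfl) _

lemma tendsto_iterlog (k : ℕ) : Tendsto (Real.log^[k]) atTop atTop := by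
  induction k with
  | zero => simpa using tendsto_id
  | succ n ih =>
    rw [Function.iterate_succ']
    exact Real.tendsto_log_atTop.comp ih

lemma tendsto_Mfun (ε : ℝ) (hε : 0 < ε) (k : ℕ) :
    Tendsto (Mfun ε k) atTop (nhds 0) := by
  have h1 : Tendsto (fun x => (Real.log^[k] x) ^ (-(1 + ε))) atTop (nhds 0) :=
    (tendsto_rpow_neg_atTop (by linarith)).comp (tendsto_iterlog k)
  apply tendsto_of_tendsto_of_tendsto_of_le_of_le' tendsto_const_nhds h1
  · filter_upwards [eventually_gt_atTop (Real.exp^[k] 0)] with x hx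
    exact (Mfun_pos hx).le
  · filter_upwards [eventually_gt_atTop (Real.exp^[k] 1)] with x hx
    have hlog : ∀ j ≤ k, 1 ≤ Real.log^[j] x := fun j hj =>
      le_of_lt (lt_of_le_of_lt (expIter_one_le _) (iterlog_lt k 1 x hx j hj))
    have hprod : 1 ≤ ∏ j ∈ Finset.range k, Real.log^[j] x := by
      calc (1:ℝ) = ∏ _j ∈ Finset.range k, 1 := by simp
        _ ≤ ∏ j ∈ Finset.range k, Real.log^[j] x :=
          Finset.prod_le_prod (fun j _ => zero_le_one)
            (fun j hj => hlog j (Nat.le_of_lt (Finset.mem_range.mp hj)))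
    have hR : 0 ≤ (Real.log^[k] x) ^ (-(1 + ε)) :=
      Real.rpow_nonneg (by linarith [hlog k le_rfl]) _
    have hinv : (∏ j ∈ Finset.range k, Real.log^[j] x)⁻¹ ≤ 1 :=
      inv_le_one_of_one_le₀ hprod
    exact mul_le_of_le_one_left hR hinv

theorem upper_map_from_derivative_limit
    (β : ℂ) (hβre : 0 < β.re) (hβim : 0 ≤ β.im)
    (ε : ℝ) (hε : 0 < ε) (k : ℕ)
    (t : ℝ) (ht : Real.exp^[k] 0 < t) (hMt : Mfun ε k t < β.re)
    (h : ℝ → ℝ) (hC : ContDiffOn ℝ 1 h (Set.Ici t))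
    (hmono : MonotoneOn h (Set.Ici t))
    (hlim : (∃ lam : ℝ, β.im / β.re < lam ∧
              Tendsto (derivWithin h (Set.Ici t)) atTop (nhds lam)) ∨
            Tendsto (derivWithin h (Set.Ici t)) atTop atTop) :
    ∃ t' : ℝ, t ≤ t' ∧
      ∀ x, t' ≤ x → β.im + Mfun ε k x ≤ h (x + (β.re - Mfun ε k x)) - h x := by
  -- Choose a slope `c` with `β.im < c * β.re`, `0 < c`, below the derivative eventually.
  obtain ⟨c, hc0, hcre, hcev⟩ :
      ∃ c : ℝ, 0 < c ∧ β.im < c * β.re ∧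
        ∀ᶠ y in atTop, c ≤ derivWithin h (Set.Ici t) y := by
    rcases hlim with ⟨lam, hlam, htend⟩ | htend
    · refine ⟨(β.im / β.re + lam) / 2, ?_, ?_, ?_⟩
      · have : 0 ≤ β.im / β.re := div_nonneg hβim hβre.le
        linarith
      · have h1 : β.im / β.re < (β.im / β.re + lam) / 2 := by linarith
        calc β.im = β.im / β.re * β.re := by field_simp
          _ < (β.im / β.re + lam) / 2 * β.re := by
            exact mul_lt_mul_of_pos_right h1 hβre
      · have h2 : (β.im / β.re + lam) / 2 < lam := by linarith
        filter_upwards [htend.eventually (eventually_gt_nhds h2)] with y hy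
        exact hy.le
    · refine ⟨β.im / β.re + 1, ?_, ?_, htend.eventually_ge_atTop _⟩
      · have : 0 ≤ β.im / β.re := div_nonneg hβim hβre.le
        linarith
      · have : (β.im / β.re + 1) * β.re = β.im + β.re := by field_simp
        linarith
  set δ : ℝ := (c * β.re - β.im) / (c + 1) with hδdef
  have hδpos : 0 < δ := div_pos (by linarith) (by linarith)
  have hδkey : δ * (c + 1) = c * β.re - β.im := by
    rw [hδdef]
    field_simp
  have hδre : δ < β.re := by
    rw [hδdef, div_lt_iff₀ (by linarith : (0:ℝ) < c + 1)]
    nlinarith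
  -- eventual bounds
  have hMev : ∀ᶠ x in atTop, Mfun ε k x ≤ δ :=
    (tendsto_Mfun ε hε k).eventually (eventually_le_nhds hδpos)
  obtain ⟨T, hT⟩ := eventually_atTop.mp (hcev.and hMev)
  refine ⟨max t T, le_max_left _ _, ?_⟩
  intro x hx
  have hxt : t ≤ x := le_trans (le_max_left _ _) hx
  have hxT : T ≤ x := le_trans (le_max_right _ _) hx
  have hMx_pos : 0 < Mfun ε k x := Mfun_pos (lt_of_lt_of_le ht hxt)
  have hMx_le : Mfun ε k x ≤ δ := (hT x hxT).2
  set ρ : ℝ := β.re - Mfun ε k x with hρdef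
  have hρpos : 0 < ρ := by rw [hρdef]; linarith
  -- Mean value inequality on `Ici (max t T)`
  have hdiff : DifferentiableOn ℝ h (Set.Ici t) := hC.differentiableOn one_ne_zero
  have hsub : Set.Ici (max t T) ⊆ Set.Ici t := Ici_subset_Ici.mpr (le_max_left _ _)
  have hderiv_eq : ∀ z ∈ interior (Set.Ici (max t T)),
      derivWithin h (Set.Ici t) z = deriv h z := by
    intro z hz
    rw [interior_Ici] at hz
    have hz' : t < z := lt_of_le_of_lt (le_max_left _ _) hz
    exact derivWithin_of_mem_nhds (Ici_mem_nhds hz')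
  have hdiff' : DifferentiableOn ℝ h (interior (Set.Ici (max t T))) := by
    intro z hz
    rw [interior_Ici] at hz
    have hz' : t < z := lt_of_le_of_lt (le_max_left _ _) hz
    exact ((hdiff z hz'.le).differentiableAt (Ici_mem_nhds hz')).differentiableWithinAt
  have hderiv_ge : ∀ z ∈ interior (Set.Ici (max t T)), c ≤ deriv h z := by
    intro z hz
    rw [← hderiv_eq z hz]
    rw [interior_Ici] at hz
    exact (hT z (le_of_lt (lt_of_le_of_lt (le_max_right _ _) hz))).1
  have hmvt := (convex_Ici (max t T)).mul_sub_le_image_sub_of_le_deriv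
    (hC.continuousOn.mono hsub) hdiff' hderiv_ge
    x hx (x + ρ) (le_trans hx (by linarith)) (by linarith)
  have hρρ : x + ρ - x = ρ := by ring
  rw [hρρ] at hmvt
  -- chain of inequalities
  have h1 : β.im + Mfun ε k x ≤ β.im + δ := by linarith
  have h2 : β.im + δ = c * (β.re - δ) := by nlinarith [hδkey]
  have h3 : c * (β.re - δ) ≤ c * ρ := by
    apply mul_le_mul_of_nonneg_left _ hc0.le
    rw [hρdef]; linarith
  calc β.im + Mfun ε k x ≤ c * ρ := by linarith
    _ ≤ h (x + ρ) - h x := hmvt
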